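/- Let d ≥ 1, t > 0, let S : L₂(ℝ^d) → L₂(ℝ^d) be a bounded operator, and let D be a set of bounded Lipschitz functions ψ : ℝ^d → ℝ. Assume that for every ψ ∈ D and every ρ ∈ ℝ the operator e^{ρψ} S e^{−ρψ} (composition of S with multiplication by e^{ρψ} on the left and by e^{−ρψ} on the right) has L₂ → L₂ operator norm at most e^{ρ²t}. For measurable sets A, B ⊆ ℝ^d define d̂(A;B) = sup_{ψ∈D} inf_{x∈A, y∈B} (ψ(x) − ψ(y)). Then for all measurable A, B and all φ_A ∈ L₂ supported in A, φ_B ∈ L₂ supported in B: |⟨φ_A, S φ_B⟩| ≤ e^{−(max(d̂(A;B),0))²/(4t)} ‖φ_A‖₂ ‖φ_B‖₂. (Abstract Davies–Gaffney estimate obtained by optimizing over ψ and ρ.) -/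

import Mathlib

open MeasureTheory Real

theorem helper_wn {α : Type*} [MeasurableSpace α] {μ : Measure α} {f g : α → ℂ} {C : ℝ} (hC : 0 ≤ C)
    (hg : MemLp g 2 μ) (h : ∀ x, ‖f x‖ ≤ C * ‖g x‖) :
    (eLpNorm f 2 μ).toReal ≤ C * (eLpNorm g 2 μ).toReal := by
  have h1 : eLpNorm f 2 μ ≤ C.toNNReal • eLpNorm g 2 μ := by
    apply eLpNorm_le_nnreal_smul_eLpNorm_of_ae_le_mul
    filter_upwards with x
    rw [← NNReal.coe_le_coe]
    push_cast
    simpa [Real.coe_toNNReal _ hC] using h x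
  have h2 : (C.toNNReal • eLpNorm g 2 μ) ≠ ⊤ := by
    simp only [ENNReal.smul_def, smul_eq_mul]
    exact ENNReal.mul_ne_top (by simp) hg.eLpNorm_ne_top
  calc (eLpNorm f 2 μ).toReal ≤ (C.toNNReal • eLpNorm g 2 μ).toReal := ENNReal.toReal_mono h2 h1
    _ = C * (eLpNorm g 2 μ).toReal := by
        simp [ENNReal.smul_def, ENNReal.toReal_mul, Real.coe_toNNReal _ hC]

theorem helper_memLp {α : Type*} [MeasurableSpace α] [TopologicalSpace α]
    [OpensMeasurableSpace α] {μ : Measure α} {g : α → ℂ}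
    {w : α → ℝ} (hw : Continuous w) {C : ℝ}
    (hb : ∀ x, w x ≤ C) (hg : MemLp g 2 μ) :
    MemLp (fun x => Complex.exp (↑(w x)) * g x) 2 μ := by
  refine MemLp.of_le_mul (c := Real.exp C) hg ?_ ?_
  · exact (Complex.continuous_exp.comp (Complex.continuous_ofReal.comp hw)).aestronglyMeasurable.mul
      hg.aestronglyMeasurable
  · filter_upwards with x
    rw [norm_mul, Complex.norm_exp]
    simp only [Complex.ofReal_re]
    exact mul_le_mul_of_nonneg_right (Real.exp_le_exp.2 (hb x)) (norm_nonneg _)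

theorem stmt_8 (d : ℕ) (hd : 1 ≤ d) (t : ℝ) (ht : 0 < t)
    (S : (EuclideanSpace ℝ (Fin d) → ℂ) → (EuclideanSpace ℝ (Fin d) → ℂ))
    (D : Set (EuclideanSpace ℝ (Fin d) → ℝ))
    (hD : ∀ ψ ∈ D, (∃ C, ∀ x, |ψ x| ≤ C) ∧ ∃ K, LipschitzWith K ψ)
    (hS : ∀ ψ ∈ D, ∀ ρ : ℝ, ∀ f g : EuclideanSpace ℝ (Fin d) → ℂ,
      MemLp f 2 volume → MemLp g 2 volume →
      ‖∫ x, (starRingEnd ℂ) (g x) * (Complex.exp (↑(ρ * ψ x)) *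
          S (fun y => Complex.exp (↑(-(ρ * ψ y))) * f y) x)‖ ≤
        Real.exp (ρ ^ 2 * t) * (eLpNorm f 2 volume).toReal * (eLpNorm g 2 volume).toReal) :
    ∀ A B : Set (EuclideanSpace ℝ (Fin d)), MeasurableSet A → MeasurableSet B →
    ∀ φA φB : EuclideanSpace ℝ (Fin d) → ℂ,
      MemLp φA 2 volume → MemLp φB 2 volume →
      (∀ x, x ∉ A → φA x = 0) → (∀ x, x ∉ B → φB x = 0) →
      ∀ c : ℝ, (∃ ψ ∈ D, ∀ x ∈ A, ∀ y ∈ B, c ≤ ψ x - ψ y) →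
      ‖∫ x, (starRingEnd ℂ) (φA x) * S φB x‖ ≤
        Real.exp (-(max c 0) ^ 2 / (4 * t)) *
          (eLpNorm φA 2 volume).toReal * (eLpNorm φB 2 volume).toReal := by
  intro A B hA hB φA φB hφA hφB hsA hsB c ⟨ψ, hψD, hψ⟩
  obtain ⟨⟨C, hC⟩, ⟨K, hK⟩⟩ := hD ψ hψD
  have hψcont : Continuous ψ := hK.continuous
  -- trivial case A = ∅
  rcases Set.eq_empty_or_nonempty A with hAe | ⟨x₀, hx₀⟩
  · have : ∀ x, φA x = 0 := fun x => hsA x (by simp [hAe])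
    simp only [this, map_zero, zero_mul, integral_zero, norm_zero]
    positivity
  -- main case
  set ρ : ℝ := max c 0 / (2 * t) with hρdef
  have hρ0 : 0 ≤ ρ := by positivity
  set m : ℝ := sInf (ψ '' A) with hm
  have hbdd : BddBelow (ψ '' A) := ⟨-C, by rintro _ ⟨x, -, rfl⟩; linarith [abs_le.1 (hC x)]⟩
  have hmA : ∀ x ∈ A, m ≤ ψ x := fun x hx => csInf_le hbdd ⟨x, hx, rfl⟩
  have hmB : ∀ y ∈ B, ψ y ≤ m - c := by
    intro y hy
    have : c + ψ y ≤ m := le_csInf ⟨ψ x₀, x₀, hx₀, rfl⟩ (by rintro _ ⟨x, hx, rfl⟩; linarith [hψ x hx y hy])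
    linarith
  set f : EuclideanSpace ℝ (Fin d) → ℂ := fun y => Complex.exp (↑(ρ * ψ y)) * φB y with hf
  set g : EuclideanSpace ℝ (Fin d) → ℂ := fun x => Complex.exp (↑(-(ρ * ψ x))) * φA x with hg
  have hfL : MemLp f 2 volume :=
    helper_memLp (continuous_const.mul hψcont) (C := ρ * C) (fun x => by
      have := abs_le.1 (hC x); nlinarith) hφB
  have hgL : MemLp g 2 volume := by
    refine helper_memLp ((continuous_const.mul hψcont).neg) (C := ρ * C) (fun x => by
      have := abs_le.1 (hC x); nlinarith) hφA
  have key := hS ψ hψD ρ f g hfL hgL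
  -- rewrite the integrand
  have heq : (fun x => (starRingEnd ℂ) (g x) * (Complex.exp (↑(ρ * ψ x)) *
          S (fun y => Complex.exp (↑(-(ρ * ψ y))) * f y) x))
      = fun x => (starRingEnd ℂ) (φA x) * S φB x := by
    funext x
    have hB' : (fun y => Complex.exp (↑(-(ρ * ψ y))) * f y) = φB := by
      funext y
      simp only [hf]
      rw [← mul_assoc, ← Complex.exp_add]
      norm_num
    rw [hB']
    simp only [hg, map_mul, ← Complex.exp_conj, Complex.conj_ofReal]
    rw [mul_assoc, mul_comm ((starRingEnd ℂ) (φA x)), ← mul_assoc, ← mul_assoc, ← Complex.exp_add]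
    norm_num [mul_comm]
  rw [heq] at key
  -- norm bounds
  have hfb : (eLpNorm f 2 volume).toReal ≤ Real.exp (ρ * (m - c)) * (eLpNorm φB 2 volume).toReal := by
    refine helper_wn (Real.exp_pos _).le hφB fun y => ?_
    by_cases hy : y ∈ B
    · rw [hf]
      simp only [norm_mul, Complex.norm_exp, Complex.ofReal_re]
      have : ρ * ψ y ≤ ρ * (m - c) := mul_le_mul_of_nonneg_left (hmB y hy) hρ0
      exact mul_le_mul_of_nonneg_right (Real.exp_le_exp.2 this) (norm_nonneg _)
    · rw [hf]; simp only [hsB y hy, mul_zero, norm_zero]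
      positivity
  have hgb : (eLpNorm g 2 volume).toReal ≤ Real.exp (-(ρ * m)) * (eLpNorm φA 2 volume).toReal := by
    refine helper_wn (Real.exp_pos _).le hφA fun x => ?_
    by_cases hx : x ∈ A
    · rw [hg]
      simp only [norm_mul, Complex.norm_exp, Complex.ofReal_re]
      have : -(ρ * ψ x) ≤ -(ρ * m) := neg_le_neg (mul_le_mul_of_nonneg_left (hmA x hx) hρ0)
      exact mul_le_mul_of_nonneg_right (Real.exp_le_exp.2 this) (norm_nonneg _)
    · rw [hg]; simp only [hsA x hx, mul_zero, norm_zero]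
      positivity
  have hexp : Real.exp (ρ ^ 2 * t) * (Real.exp (ρ * (m - c)) * (eLpNorm φB 2 volume).toReal)
        * (Real.exp (-(ρ * m)) * (eLpNorm φA 2 volume).toReal)
      = Real.exp (ρ ^ 2 * t - ρ * c) * (eLpNorm φA 2 volume).toReal * (eLpNorm φB 2 volume).toReal := by
    have h3 : ρ ^ 2 * t - ρ * c = ρ ^ 2 * t + ρ * (m - c) + -(ρ * m) := by ring
    rw [h3, Real.exp_add, Real.exp_add]
    ring
  have hval : ρ ^ 2 * t - ρ * c = -(max c 0) ^ 2 / (4 * t) := by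
    rcases le_or_gt c 0 with h | h
    · have : max c 0 = 0 := max_eq_right h
      rw [hρdef, this]; field_simp; ring
    · have : max c 0 = c := max_eq_left h.le
      rw [hρdef, this]; field_simp; ring
  calc ‖∫ x, (starRingEnd ℂ) (φA x) * S φB x‖
      ≤ Real.exp (ρ ^ 2 * t) * (eLpNorm f 2 volume).toReal * (eLpNorm g 2 volume).toReal := key
    _ ≤ Real.exp (ρ ^ 2 * t) * (Real.exp (ρ * (m - c)) * (eLpNorm φB 2 volume).toReal)
        * (Real.exp (-(ρ * m)) * (eLpNorm φA 2 volume).toReal) := by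
        apply mul_le_mul
        · exact mul_le_mul_of_nonneg_left hfb (Real.exp_pos _).le
        · exact hgb
        · exact ENNReal.toReal_nonneg
        · positivity
    _ = Real.exp (-(max c 0) ^ 2 / (4 * t)) * (eLpNorm φA 2 volume).toReal * (eLpNorm φB 2 volume).toReal := by
        rw [hexp, hval]
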